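/- arXiv:1902.00759 — 2 statements merged into one kernel-verified Lean document; each statement's English description precedes it below -/
import Mathlib

section
/- For every ξ ∈ ℓ^∞ \ c₀ there exists a Dunford–Schwartz operator T : ℓ^∞ → ℓ^∞ (i.e., a linear map contracting both the ℓ¹-norm on ℓ¹ and the sup-norm on ℓ^∞) such that the Cesàro averages A_n(T)(ξ) = (1/(n+1)) Σ_{k=0}^n T^k(ξ) fail to converge coordinate-wise, hence fail to converge in sup-norm. -/
open Filter Topology

noncomputable section

/-- Iterates of a linear map. -/
def lmPow {M : Type*} [AddCommGroup M] [Module ℂ M] (T : M →ₗ[ℂ] M) : ℕ → (M →ₗ[ℂ] M)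
  | 0 => LinearMap.id
  | k + 1 => T ∘ₗ lmPow T k
/-- boundedness of a complex sequence (membership in `ℓ^∞`). -/
def Bdd (ξ : ℕ → ℂ) : Prop := BddAbove (Set.range fun n => ‖ξ n‖)

/-- sup-norm of a sequence. -/
def supNorm (ξ : ℕ → ℂ) : ℝ := ⨆ n, ‖ξ n‖

/-- `ℓ¹`-norm of a sequence. -/
def l1Norm (ξ : ℕ → ℂ) : ℝ := ∑' n, ‖ξ n‖

/-- The non-increasing rearrangement of a bounded sequence, 0-indexed:
`rearr ξ n = inf { sup_{m ∉ F} |ξ m| : F ⊆ ℕ, |F| ≤ n }` (so `rearr ξ n = ξ*_{n+1}`). -/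
def rearr (ξ : ℕ → ℂ) (n : ℕ) : ℝ :=
  ⨅ F : {F : Finset ℕ // F.card ≤ n}, ⨆ m : {m : ℕ // m ∉ F.1}, ‖ξ m.1‖

/-- Hardy–Littlewood–Pólya submajorization of sequences. -/
def seqSubmaj (ξ η : ℕ → ℂ) : Prop :=
  ∀ m : ℕ, ∑ n ∈ Finset.range m, rearr ξ n ≤ ∑ n ∈ Finset.range m, rearr η n

/-- A symmetric sequence space: a nonzero linear subspace of `ℓ^∞` with a complete norm,
such that `ξ* ≤ η*`, `η ∈ E`, `ξ ∈ ℓ^∞` imply `ξ ∈ E` and `‖ξ‖_E ≤ ‖η‖_E`. -/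
structure SymSeqSpace where
  carrier : Set (ℕ → ℂ)
  nrm : (ℕ → ℂ) → ℝ
  bdd : ∀ ξ ∈ carrier, Bdd ξ
  nonzero : ∃ ξ ∈ carrier, ξ ≠ 0
  add_mem : ∀ ξ η, ξ ∈ carrier → η ∈ carrier → ξ + η ∈ carrier
  smul_mem : ∀ (c : ℂ) ξ, ξ ∈ carrier → c • ξ ∈ carrier
  nrm_add : ∀ ξ η, ξ ∈ carrier → η ∈ carrier → nrm (ξ + η) ≤ nrm ξ + nrm η
  nrm_smul : ∀ (c : ℂ) ξ, ξ ∈ carrier → nrm (c • ξ) = ‖c‖ * nrm ξ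
  nrm_pos : ∀ ξ ∈ carrier, ξ ≠ 0 → 0 < nrm ξ
  complete : ∀ f : ℕ → (ℕ → ℂ), (∀ k, f k ∈ carrier) →
    (∀ ε : ℝ, 0 < ε → ∃ N, ∀ j k, N ≤ j → N ≤ k → nrm (f j - f k) < ε) →
    ∃ g ∈ carrier, Filter.Tendsto (fun k => nrm (f k - g)) Filter.atTop (nhds 0)
  symm : ∀ ξ η, η ∈ carrier → Bdd ξ → (∀ n, rearr ξ n ≤ rearr η n) →
    ξ ∈ carrier ∧ nrm ξ ≤ nrm η

/-- A fully symmetric sequence space. -/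
structure FullySymSeqSpace extends SymSeqSpace where
  fullySymm : ∀ ξ η, η ∈ carrier → Bdd ξ → seqSubmaj ξ η → ξ ∈ carrier ∧ nrm ξ ≤ nrm η

/-- Separability of a symmetric sequence space. -/
def SepSeq (E : SymSeqSpace) : Prop :=
  ∃ D : Set (ℕ → ℂ), D.Countable ∧ D ⊆ E.carrier ∧
    ∀ ξ ∈ E.carrier, ∀ ε : ℝ, 0 < ε → ∃ η ∈ D, E.nrm (ξ - η) < ε
/-- A Dunford–Schwartz operator on sequence spaces: contracts the sup-norm on `ℓ^∞`
and the `ℓ¹`-norm on `ℓ¹`. -/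
def IsDSseq (T : (ℕ → ℂ) →ₗ[ℂ] (ℕ → ℂ)) : Prop :=
  (∀ ξ, Bdd ξ → Bdd (T ξ) ∧ supNorm (T ξ) ≤ supNorm ξ) ∧
  (∀ ξ, Summable (fun n => ‖ξ n‖) →
    Summable (fun n => ‖T ξ n‖) ∧ l1Norm (T ξ) ≤ l1Norm ξ)

/-- Cesàro averages of a sequence operator. -/
def cesaroSeq (T : (ℕ → ℂ) →ₗ[ℂ] (ℕ → ℂ)) (n : ℕ) (ξ : ℕ → ℂ) : ℕ → ℂ :=
  ((n : ℂ) + 1)⁻¹ • ∑ k ∈ Finset.range (n + 1), (lmPow T k) ξ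
namespace Stmt7Aux

attribute [local instance] Classical.propDecidable

/-- the orbit map: `0, p 0, p 1, p 2, ...` -/
def orb (p : ℕ → ℕ) : ℕ → ℕ
  | 0 => 0
  | k + 1 => p k

lemma orb_inj {p : ℕ → ℕ} (hp1 : ∀ k, 1 ≤ p k) (hpm : StrictMono p) :
    Function.Injective (orb p) := by
  intro a b hab
  match a, b with
  | 0, 0 => rfl
  | 0, b + 1 => exact absurd hab.symm (by have := hp1 b; simp [orb]; omega)
  | a + 1, 0 => exact absurd hab (by have := hp1 a; simp [orb]; omega)
  | a + 1, b + 1 => simpa [orb, hpm.injective.eq_iff] using hab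

/-- the shift along the orbit, identity elsewhere. -/
def sig (p : ℕ → ℕ) : ℕ → ℕ :=
  fun m => if h : ∃ k, orb p k = m then orb p (h.choose + 1) else m

lemma sig_orb {p : ℕ → ℕ} (hinj : Function.Injective (orb p)) (k : ℕ) :
    sig p (orb p k) = orb p (k + 1) := by
  have h : ∃ j, orb p j = orb p k := ⟨k, rfl⟩
  rw [sig, dif_pos h, hinj h.choose_spec]

lemma sig_inj {p : ℕ → ℕ} (hinj : Function.Injective (orb p)) :
    Function.Injective (sig p) := by
  intro a b hab
  unfold sig at hab
  split_ifs at hab with ha hb hb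
  · have h1 : ha.choose + 1 = hb.choose + 1 := hinj hab
    rw [← ha.choose_spec, ← hb.choose_spec]
    exact congrArg (orb p) (by omega)
  · exact absurd ⟨_, hab⟩ hb
  · exact absurd ⟨_, hab.symm⟩ ha
  · exact hab

/-- the coefficient sequence. -/
def coeff (p : ℕ → ℕ) (ε : ℕ → ℂ) : ℕ → ℂ :=
  fun m => if h : ∃ k, orb p k = m then ε (h.choose + 1) / ε h.choose else 1

lemma coeff_orb {p : ℕ → ℕ} (ε : ℕ → ℂ) (hinj : Function.Injective (orb p)) (k : ℕ) :
    coeff p ε (orb p k) = ε (k + 1) / ε k := by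
  have h : ∃ j, orb p j = orb p k := ⟨k, rfl⟩
  rw [coeff, dif_pos h, hinj h.choose_spec]

lemma coeff_abs {p : ℕ → ℕ} {ε : ℕ → ℂ} (hε : ∀ k, ‖ε k‖ = 1) (m : ℕ) :
    ‖coeff p ε m‖ = 1 := by
  unfold coeff
  split_ifs with h
  · rw [norm_div, hε, hε, div_one]
  · simp

/-- the weighted shift operator. -/
def opT (p : ℕ → ℕ) (ε : ℕ → ℂ) : (ℕ → ℂ) →ₗ[ℂ] (ℕ → ℂ) where
  toFun η := fun m => coeff p ε m * η (sig p m)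
  map_add' η₁ η₂ := by funext m; simp [Pi.add_apply]; ring
  map_smul' a η := by funext m; simp [Pi.smul_apply, smul_eq_mul]; ring

lemma opT_apply (p : ℕ → ℕ) (ε : ℕ → ℂ) (η : ℕ → ℂ) (m : ℕ) :
    opT p ε η m = coeff p ε m * η (sig p m) := rfl

lemma isDS_opT (p : ℕ → ℕ) (ε : ℕ → ℂ) (hε : ∀ k, ‖ε k‖ = 1)
    (hσ : Function.Injective (sig p)) : IsDSseq (opT p ε) := by
  constructor
  · intro η hη
    have hbd : ∀ m, ‖η m‖ ≤ supNorm η := fun m => le_ciSup hη m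
    have key : ∀ m, ‖opT p ε η m‖ ≤ supNorm η := by
      intro m
      rw [opT_apply, norm_mul, coeff_abs hε, one_mul]
      exact hbd _
    constructor
    · exact ⟨supNorm η, by rintro x ⟨m, rfl⟩; exact key m⟩
    · exact ciSup_le key
  · intro η hη
    have hcomp : Summable fun m => ‖η (sig p m)‖ := hη.comp_injective hσ
    have hle : ∀ m, ‖opT p ε η m‖ ≤ ‖η (sig p m)‖ := by
      intro m
      rw [opT_apply, norm_mul, coeff_abs hε, one_mul]
    have hs : Summable fun m => ‖opT p ε η m‖ :=
      Summable.of_nonneg_of_le (fun _ => norm_nonneg _) hle hcomp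
    refine ⟨hs, ?_⟩
    unfold l1Norm
    calc ∑' m, ‖opT p ε η m‖ ≤ ∑' m, ‖η (sig p m)‖ :=
          hs.tsum_le_tsum hle hcomp
      _ ≤ ∑' m, ‖η m‖ :=
          hcomp.tsum_le_tsum_of_inj (sig p) hσ (fun c _ => norm_nonneg _)
            (fun m => le_rfl) hη

lemma lmPow_opT {p : ℕ → ℕ} {ε : ℕ → ℂ} (hinj : Function.Injective (orb p))
    (hε0 : ∀ k, ε k ≠ 0) (η : ℕ → ℂ) :
    ∀ (k i : ℕ), lmPow (opT p ε) k η (orb p i) = (ε (i + k) / ε i) * η (orb p (i + k)) := by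
  intro k
  induction k with
  | zero => intro i; simp [lmPow, div_self (hε0 i)]
  | succ k ih =>
    intro i
    have h1 : lmPow (opT p ε) (k + 1) η = opT p ε (lmPow (opT p ε) k η) := rfl
    rw [h1, opT_apply, sig_orb hinj, coeff_orb ε hinj, ih (i + 1)]
    have e : i + 1 + k = i + (k + 1) := by omega
    rw [e, ← mul_assoc, div_mul_div_comm, mul_comm (ε i), mul_div_mul_left _ _ (hε0 (i + 1))]

end Stmt7Aux

/-- for every `ξ ∈ ℓ^∞ \ c₀` there is a Dunford–Schwartz operator on sequences
whose Cesàro averages at `ξ` do not converge coordinate-wise. -/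
theorem stmt7 (ξ : ℕ → ℂ) (hb : Bdd ξ) (hnc : ¬ Tendsto (fun n => ξ n) atTop (nhds 0)) :
    ∃ T : (ℕ → ℂ) →ₗ[ℂ] (ℕ → ℂ), IsDSseq T ∧
      ¬ ∃ η : ℕ → ℂ, ∀ m, Tendsto (fun n => cesaroSeq T n ξ m) atTop (nhds (η m)) := by
  classical
  -- extract δ and a strictly monotone sequence of witnesses
  rw [Metric.tendsto_atTop] at hnc
  push_neg at hnc
  obtain ⟨δ, hδ, hfr⟩ := hnc
  have hfr' : ∀ N : ℕ, ∃ m, N < m ∧ δ ≤ ‖ξ m‖ := by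
    intro N
    obtain ⟨m, hm1, hm2⟩ := hfr (N + 1)
    refine ⟨m, by omega, ?_⟩
    simpa [Complex.dist_eq] using hm2
  choose q hq1 hq2 using hfr'
  set p : ℕ → ℕ := fun k => q^[k + 1] 0 with hpdef
  have hps : ∀ k, p (k + 1) = q (p k) := fun k => Function.iterate_succ_apply' q (k + 1) 0
  have hp0 : p 0 = q 0 := rfl
  have hpm : StrictMono p := strictMono_nat_of_lt_succ (fun k => by rw [hps]; exact hq1 _)
  have hp1 : ∀ k, 1 ≤ p k := by
    intro k
    have h0 : 1 ≤ p 0 := by rw [hp0]; have := hq1 0; omega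
    exact h0.trans (hpm.monotone (Nat.zero_le k))
  have hpδ : ∀ k, δ ≤ ‖ξ (p k)‖ := by
    intro k
    cases k with
    | zero => rw [hp0]; exact hq2 0
    | succ k => rw [hps]; exact hq2 _
  -- sup norm bound
  set M : ℝ := supNorm ξ with hMdef
  have hMb : ∀ m, ‖ξ m‖ ≤ M := fun m => le_ciSup hb m
  have hδM : δ ≤ M := (hpδ 0).trans (hMb _)
  have hM0 : 0 ≤ M := le_trans hδ.le hδM
  -- block length
  set C : ℕ := max 2 (Nat.ceil (2 * (M + δ) / δ)) with hCdef
  have hC2 : 2 ≤ C := le_max_left _ _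
  have hCb : 2 * (M + δ) ≤ δ * C := by
    have h1 : 2 * (M + δ) / δ ≤ (Nat.ceil (2 * (M + δ) / δ) : ℝ) := Nat.le_ceil _
    have h2 : ((Nat.ceil (2 * (M + δ) / δ) : ℕ) : ℝ) ≤ (C : ℝ) :=
      Nat.cast_le.2 (le_max_right _ _)
    have := h1.trans h2
    rw [div_le_iff₀ hδ] at this
    linarith
  have hC0R : (0 : ℝ) < C := by positivity
  -- coefficient data
  have hξp0 : ∀ j, ξ (p j) ≠ 0 := by
    intro j h
    have := hpδ j
    rw [h] at this
    simp at this
    linarith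
  set ε : ℕ → ℂ := fun k =>
    Nat.casesOn k 1 (fun j =>
      ((-1 : ℂ) ^ (Nat.log C (j + 1)) * (‖ξ (p j)‖ : ℂ)) / ξ (p j)) with hεdef
  have hε00 : ε 0 = 1 := rfl
  have hεs : ∀ j, ε (j + 1) =
      ((-1 : ℂ) ^ (Nat.log C (j + 1)) * (‖ξ (p j)‖ : ℂ)) / ξ (p j) := fun j => rfl
  have hεabs : ∀ k, ‖ε k‖ = 1 := by
    intro k
    cases k with
    | zero => simp [hε00]
    | succ j =>
      rw [hεs, norm_div, norm_mul, norm_pow]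
      rw [Complex.norm_real, norm_norm]
      simp [div_self (fun h => hξp0 j (norm_eq_zero.mp h))]
  have hε0 : ∀ k, ε k ≠ 0 := by
    intro k h
    have := hεabs k
    rw [h] at this
    simp at this
  -- the operator
  have hoinj : Function.Injective (Stmt7Aux.orb p) := Stmt7Aux.orb_inj hp1 hpm
  set T := Stmt7Aux.opT p ε with hTdef
  refine ⟨T, Stmt7Aux.isDS_opT p ε hεabs (Stmt7Aux.sig_inj hoinj), ?_⟩
  rintro ⟨η, hη⟩
  -- the coordinate-0 sequence of the iterates
  set A : ℕ → ℂ := fun k => lmPow T k ξ 0 with hAdef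
  have horb0 : Stmt7Aux.orb p 0 = 0 := rfl
  have hAk : ∀ k, A k = ε k * ξ (Stmt7Aux.orb p k) := by
    intro k
    have := Stmt7Aux.lmPow_opT hoinj hε0 ξ k 0
    rw [horb0] at this
    rw [hAdef]
    simp only [hTdef, this, zero_add, hε00, div_one]
  have hA1 : ∀ j, (A (j + 1)).re =
      (-1 : ℝ) ^ (Nat.log C (j + 1)) * ‖ξ (p j)‖ := by
    intro j
    rw [hAk]
    have horb : Stmt7Aux.orb p (j + 1) = p j := rfl
    rw [horb, hεs, div_mul_cancel₀ _ (hξp0 j)]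
    have hcast : (-1 : ℂ) ^ (Nat.log C (j + 1)) * (‖ξ (p j)‖ : ℂ) =
        (((-1 : ℝ) ^ (Nat.log C (j + 1)) * ‖ξ (p j)‖ : ℝ) : ℂ) := by
      push_cast
      ring
    rw [hcast, Complex.ofReal_re]
  have hAabs : ∀ k, ‖A k‖ ≤ M := by
    intro k
    rw [hAk, norm_mul, hεabs, one_mul]
    exact hMb _
  have hArebd : ∀ k, |(A k).re| ≤ M := fun k => (Complex.abs_re_le_norm _).trans (hAabs k)
  -- partial sums of real parts
  set S : ℕ → ℝ := fun N => ∑ k ∈ Finset.range N, (A k).re with hSdef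
  have hSbd : ∀ N, |S N| ≤ M * N := by
    intro N
    calc |S N| ≤ ∑ k ∈ Finset.range N, |(A k).re| := Finset.abs_sum_le_sum_abs _ _
      _ ≤ ∑ _k ∈ Finset.range N, M := Finset.sum_le_sum (fun k _ => hArebd k)
      _ = M * N := by rw [Finset.sum_const, Finset.card_range]; ring
  -- the block estimate
  have hblock : ∀ j : ℕ,
      δ * ((C : ℝ) ^ (j + 1) - (C : ℝ) ^ j) - M * (C : ℝ) ^ j ≤ (-1 : ℝ) ^ j * S (C ^ (j + 1)) := by
    intro j
    have hle : C ^ j ≤ C ^ (j + 1) := Nat.pow_le_pow_right (by omega) (by omega)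
    have hsplit : S (C ^ (j + 1)) =
        S (C ^ j) + ∑ k ∈ Finset.Ico (C ^ j) (C ^ (j + 1)), (A k).re := by
      rw [hSdef]
      exact (Finset.sum_range_add_sum_Ico _ hle).symm
    have hterm : ∀ k ∈ Finset.Ico (C ^ j) (C ^ (j + 1)),
        δ ≤ (-1 : ℝ) ^ j * (A k).re := by
      intro k hk
      rw [Finset.mem_Ico] at hk
      have hk1 : 1 ≤ k := le_trans (Nat.one_le_pow _ _ (by omega)) hk.1
      have hkk : k - 1 + 1 = k := by omega
      have hlog : Nat.log C k = j := Nat.log_eq_of_pow_le_of_lt_pow hk.1 hk.2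
      have := hA1 (k - 1)
      rw [hkk, hlog] at this
      rw [this, ← mul_assoc, ← pow_add, Even.neg_one_pow (Even.add_self j), one_mul]
      exact hpδ _
    have hsum : (δ : ℝ) * ((C : ℝ) ^ (j + 1) - (C : ℝ) ^ j) ≤
        ∑ k ∈ Finset.Ico (C ^ j) (C ^ (j + 1)), (-1 : ℝ) ^ j * (A k).re := by
      have hcard : ((Finset.Ico (C ^ j) (C ^ (j + 1))).card : ℝ) =
          (C : ℝ) ^ (j + 1) - (C : ℝ) ^ j := by
        rw [Nat.card_Ico, Nat.cast_sub hle]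
        push_cast
        ring
      calc (δ : ℝ) * ((C : ℝ) ^ (j + 1) - (C : ℝ) ^ j)
          = ((Finset.Ico (C ^ j) (C ^ (j + 1))).card : ℝ) * δ := by rw [hcard]; ring
        _ = ∑ _k ∈ Finset.Ico (C ^ j) (C ^ (j + 1)), δ := by
            rw [Finset.sum_const, nsmul_eq_mul]
        _ ≤ _ := Finset.sum_le_sum hterm
    have hSsmall : -(M * (C : ℝ) ^ j) ≤ (-1 : ℝ) ^ j * S (C ^ j) := by
      have h1 : |(-1 : ℝ) ^ j * S (C ^ j)| = |S (C ^ j)| := by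
        rw [abs_mul, abs_pow, abs_neg, abs_one, one_pow, one_mul]
      have h2 := neg_abs_le ((-1 : ℝ) ^ j * S (C ^ j))
      rw [h1] at h2
      have h3 := hSbd (C ^ j)
      have h4 : ((C ^ j : ℕ) : ℝ) = (C : ℝ) ^ j := by push_cast; ring
      rw [h4] at h3
      linarith
    rw [hsplit, mul_add]
    rw [← Finset.mul_sum] at hsum
    linarith
  -- identify the Cesàro averages at coordinate 0
  have hf : ∀ m : ℕ, (cesaroSeq T m ξ 0).re = ((m : ℝ) + 1)⁻¹ * S (m + 1) := by
    intro m
    have h1 : cesaroSeq T m ξ 0 = ((m : ℂ) + 1)⁻¹ * ∑ k ∈ Finset.range (m + 1), A k := by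
      rw [cesaroSeq, Pi.smul_apply, smul_eq_mul, Finset.sum_apply]
    have h2 : ((m : ℂ) + 1)⁻¹ = ((((m : ℝ) + 1)⁻¹ : ℝ) : ℂ) := by push_cast; ring
    rw [h1, h2, Complex.mul_re, Complex.ofReal_re, Complex.ofReal_im, Complex.re_sum]
    simp only [hSdef]
    ring
  -- the oscillation estimate for the averages
  have hosc : ∀ j : ℕ, δ / 2 ≤ (-1 : ℝ) ^ j * (cesaroSeq T (C ^ (j + 1) - 1) ξ 0).re := by
    intro j
    have hN1 : 1 ≤ C ^ (j + 1) := Nat.one_le_pow _ _ (by omega)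
    have hm : (C ^ (j + 1) - 1) + 1 = C ^ (j + 1) := by omega
    have hcastm : ((C ^ (j + 1) - 1 : ℕ) : ℝ) + 1 = (C : ℝ) ^ (j + 1) := by
      have h5 : ((C ^ (j + 1) - 1 : ℕ) : ℝ) = (C : ℝ) ^ (j + 1) - 1 := by
        rw [Nat.cast_sub hN1]
        push_cast
        ring
      rw [h5]
      ring
    rw [hf, hm, hcastm]
    have hNpos : (0 : ℝ) < (C : ℝ) ^ (j + 1) := by positivity
    have hCjpos : (0 : ℝ) < (C : ℝ) ^ j := by positivity
    have hkey : δ / 2 * (C : ℝ) ^ (j + 1) ≤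
        δ * ((C : ℝ) ^ (j + 1) - (C : ℝ) ^ j) - M * (C : ℝ) ^ j := by
      have hCpow : (C : ℝ) ^ (j + 1) = (C : ℝ) * (C : ℝ) ^ j := by ring
      rw [hCpow]
      nlinarith [hCjpos, hδ, hM0, hCb]
    have hX : δ / 2 * (C : ℝ) ^ (j + 1) ≤ (-1 : ℝ) ^ j * S (C ^ (j + 1)) :=
      le_trans hkey (hblock j)
    calc δ / 2 = δ / 2 * (C : ℝ) ^ (j + 1) * ((C : ℝ) ^ (j + 1))⁻¹ := by
          field_simp
      _ ≤ (-1 : ℝ) ^ j * S (C ^ (j + 1)) * ((C : ℝ) ^ (j + 1))⁻¹ :=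
          mul_le_mul_of_nonneg_right hX (by positivity)
      _ = (-1 : ℝ) ^ j * (((C : ℝ) ^ (j + 1))⁻¹ * S (C ^ (j + 1))) := by ring
  -- derive a contradiction
  have h0 := hη 0
  have hre : Tendsto (fun n => (cesaroSeq T n ξ 0).re) atTop (nhds (η 0).re) :=
    (Complex.continuous_re.tendsto _).comp h0
  have hmono : ∀ j : ℕ, j ≤ C ^ (2 * j + 1) - 1 ∧ j ≤ C ^ (2 * j + 2) - 1 := by
    intro j
    have h1 : j < 2 ^ j := Nat.lt_two_pow_self (n := j)
    have h2 : (2 : ℕ) ^ j ≤ 2 ^ (2 * j + 1) := Nat.pow_le_pow_right (by omega) (by omega)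
    have h3 : (2 : ℕ) ^ (2 * j + 1) ≤ C ^ (2 * j + 1) := Nat.pow_le_pow_left hC2 _
    have h4 : (2 : ℕ) ^ (2 * j + 1) ≤ C ^ (2 * j + 2) :=
      h3.trans (Nat.pow_le_pow_right (by omega) (by omega))
    omega
  have heven : Tendsto (fun j : ℕ => (cesaroSeq T (C ^ (2 * j + 1) - 1) ξ 0).re)
      atTop (nhds (η 0).re) :=
    hre.comp (tendsto_atTop_mono (fun j => (hmono j).1) tendsto_id)
  have hodd : Tendsto (fun j : ℕ => (cesaroSeq T (C ^ (2 * j + 2) - 1) ξ 0).re)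
      atTop (nhds (η 0).re) :=
    hre.comp (tendsto_atTop_mono (fun j => (hmono j).2) tendsto_id)
  have hL1 : δ / 2 ≤ (η 0).re := by
    apply ge_of_tendsto' heven
    intro j
    have := hosc (2 * j)
    rwa [pow_mul, neg_one_sq, one_pow, one_mul] at this
  have hL2 : (η 0).re ≤ -(δ / 2) := by
    apply le_of_tendsto' hodd
    intro j
    have := hosc (2 * j + 1)
    rw [pow_succ, pow_mul, neg_one_sq, one_pow, one_mul, neg_one_mul] at this
    linarith
  linarith
end
end

section
/- For every bounded non-compact operator x on an infinite-dimensional Hilbert space H, there exists a Dunford–Schwartz operator T on B(H) such that the Cesàro averages A_n(T)(x) do not converge in operator norm. -/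
open Filter Topology

noncomputable section

variable {H : Type*} [NormedAddCommGroup H] [InnerProductSpace ℂ H] [CompleteSpace H]

/-- The `n`-th singular value (approximation number) of a bounded operator, 0-indexed:
`sVal x n` is the distance from `x` to the operators of rank at most `n`.  For a compact
operator `x` this equals the `(n+1)`-st singular value `s_{n+1}(x)` (eigenvalues of `|x|`
in decreasing order with multiplicity, padded with zeros). -/
def sVal (x : H →L[ℂ] H) (n : ℕ) : ℝ :=
  ⨅ F : {F : H →L[ℂ] H // Module.rank ℂ (LinearMap.range (F : H →ₗ[ℂ] H)) ≤ (n : Cardinal)},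
    ‖x - F.1‖

/-- Compactness of a bounded operator. -/
def IsCpt (x : H →L[ℂ] H) : Prop := IsCompactOperator (⇑x)

/-- Hardy–Littlewood–Pólya submajorization `y ≺≺ x` for operators. -/
def Submaj (y x : H →L[ℂ] H) : Prop :=
  ∀ m : ℕ, ∑ n ∈ Finset.range m, sVal y n ≤ ∑ n ∈ Finset.range m, sVal x n

/-- The trace norm, via singular values. -/
def traceNorm (x : H →L[ℂ] H) : ℝ := ∑' n, sVal x n

/-- A Dunford–Schwartz operator on `B(H)`: a linear map contracting the operator norm
and contracting the trace norm on the trace class. -/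
def IsDS (T : (H →L[ℂ] H) →ₗ[ℂ] (H →L[ℂ] H)) : Prop :=
  (∀ x : H →L[ℂ] H, ‖T x‖ ≤ ‖x‖) ∧
  ∀ x : H →L[ℂ] H, Summable (sVal x) →
    Summable (sVal (T x)) ∧ traceNorm (T x) ≤ traceNorm x

/-- Cesàro averages `A_n(T)(x) = (1/(n+1)) ∑_{k=0}^n T^k x`. -/
def cesaro (T : (H →L[ℂ] H) →ₗ[ℂ] (H →L[ℂ] H)) (n : ℕ) (x : H →L[ℂ] H) : H →L[ℂ] H :=
  ((n : ℂ) + 1)⁻¹ • ∑ k ∈ Finset.range (n + 1), (lmPow T k) x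

/-- The singular value sequence of an operator, as a complex sequence. -/
def svalC (x : H →L[ℂ] H) : ℕ → ℂ := fun n => (sVal x n : ℂ)

/-- Positivity of an operator on a Hilbert space. -/
def IsPosOp (x : H →L[ℂ] H) : Prop :=
  IsSelfAdjoint x ∧ ∀ v : H, 0 ≤ (@inner ℂ H _ (x v) v).re


/-! ### Auxiliary machinery for `stmt8` -/

section Stmt8Aux

open Submodule in
/-- A continuous linear map into a finite-dimensional space is a compact operator. -/
theorem isCompactOperator_into_findim {E F : Type*} [NormedAddCommGroup E] [NormedSpace ℂ E]
    [NormedAddCommGroup F] [NormedSpace ℂ F] [FiniteDimensional ℂ F] (f : E →L[ℂ] F) :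
    IsCompactOperator (⇑f) := by
  haveI : ProperSpace F := FiniteDimensional.proper ℂ F
  refine ⟨Metric.closedBall 0 ‖f‖, isCompact_closedBall _ _, ?_⟩
  have hsub : Metric.closedBall (0 : E) 1 ⊆ ⇑f ⁻¹' Metric.closedBall 0 ‖f‖ := by
    intro v hv
    simp only [Metric.mem_closedBall, dist_zero_right] at hv
    simp only [Set.mem_preimage, Metric.mem_closedBall, dist_zero_right]
    calc ‖f v‖ ≤ ‖f‖ * ‖v‖ := f.le_opNorm v
      _ ≤ ‖f‖ * 1 := by gcongr
      _ = ‖f‖ := mul_one _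
  exact Filter.mem_of_superset (Metric.closedBall_mem_nhds 0 one_pos) hsub

/-- A non-compact operator is bounded below by some `δ > 0` on a unit vector orthogonal to
any given finite set. -/
theorem exists_perp_unit (x : H →L[ℂ] H) (hx : ¬ IsCompactOperator (⇑x)) :
    ∃ δ : ℝ, 0 < δ ∧ ∀ s : Finset H, ∃ v : H,
      v ∈ (Submodule.span ℂ (s : Set H))ᗮ ∧ ‖v‖ = 1 ∧ δ ≤ ‖x v‖ := by
  by_contra hcon
  push_neg at hcon
  apply hx
  have key : ∀ n : ℕ, ∃ g : H →L[ℂ] H, IsCompactOperator (⇑g) ∧ ‖x - g‖ ≤ 1 / (n + 1 : ℝ) := by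
    intro n
    have hδ : 0 < 1 / (n + 1 : ℝ) := by positivity
    obtain ⟨s, hs⟩ := hcon (1 / (n + 1 : ℝ)) hδ
    set V : Submodule ℂ H := Submodule.span ℂ (s : Set H) with hV
    haveI : FiniteDimensional ℂ V := FiniteDimensional.span_finset ℂ s
    set P : H →L[ℂ] V := Submodule.orthogonalProjection V with hP
    refine ⟨(x ∘L V.subtypeL) ∘L P, ?_, ?_⟩
    · exact (isCompactOperator_into_findim P).continuous_comp (x ∘L V.subtypeL).continuous
    · apply ContinuousLinearMap.opNorm_le_bound _ hδ.le
      intro v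
      have happ : (x - (x ∘L V.subtypeL) ∘L P) v = x (v - (P v : H)) := by
        simp [ContinuousLinearMap.sub_apply, map_sub]
      have hmem : v - (P v : H) ∈ Vᗮ := Submodule.sub_starProjection_mem_orthogonal (K := V) v
      have hxw : ‖x (v - (P v : H))‖ ≤ (1 / (n + 1 : ℝ)) * ‖v - (P v : H)‖ := by
        rcases eq_or_ne (v - (P v : H)) 0 with h0 | h0
        · simp [h0]
        · set c : ℝ := ‖v - (P v : H)‖ with hc
          have hcpos : 0 < c := norm_pos_iff.mpr h0
          have hne : (c : ℂ) ≠ 0 := by exact_mod_cast hcpos.ne'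
          set wv : H := (c : ℂ)⁻¹ • (v - (P v : H)) with hwv
          have hwmem : wv ∈ Vᗮ := Submodule.smul_mem _ _ hmem
          have hwnorm : ‖wv‖ = 1 := by
            rw [hwv, norm_smul, norm_inv, Complex.norm_real, Real.norm_eq_abs,
              abs_of_pos hcpos, ← hc, inv_mul_cancel₀ hcpos.ne']
          have hlt := hs wv hwmem hwnorm
          have hxv : x (v - (P v : H)) = (c : ℂ) • x wv := by
            rw [hwv, map_smul, smul_smul, mul_inv_cancel₀ hne]; rw [one_smul]
          rw [hxv, norm_smul]
          simp only [Complex.norm_real, Real.norm_eq_abs, abs_of_pos hcpos]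
          calc c * ‖x wv‖ ≤ c * (1 / (n + 1 : ℝ)) :=
                mul_le_mul_of_nonneg_left hlt.le hcpos.le
            _ = (1 / (n + 1 : ℝ)) * c := mul_comm _ _
      have hle : ‖v - (P v : H)‖ ≤ ‖v‖ := by
        have hpyth := Submodule.norm_sq_eq_add_norm_sq_projection v V
        have heq : (Submodule.orthogonalProjection Vᗮ v : H) = v - (P v : H) := by
          rw [eq_sub_iff_add_eq, add_comm]
          exact Submodule.starProjection_add_starProjection_orthogonal (K := V) v
        have h2 : ‖v - (P v : H)‖ ^ 2 ≤ ‖v‖ ^ 2 := by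
          rw [← heq]
          calc ‖(Submodule.orthogonalProjection Vᗮ v : H)‖ ^ 2
              = ‖Submodule.orthogonalProjection Vᗮ v‖ ^ 2 := rfl
            _ ≤ ‖v‖ ^ 2 := by nlinarith [norm_nonneg (Submodule.orthogonalProjection V v), hpyth]
        nlinarith [norm_nonneg v, norm_nonneg (v - (P v : H))]
      rw [happ]
      calc ‖x (v - (P v : H))‖ ≤ (1 / (n + 1 : ℝ)) * ‖v - (P v : H)‖ := hxw
        _ ≤ (1 / (n + 1 : ℝ)) * ‖v‖ := by gcongr
  choose F hFc hFle using key
  have htend : Tendsto F atTop (nhds x) := by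
    rw [tendsto_iff_norm_sub_tendsto_zero]
    apply squeeze_zero (fun n => norm_nonneg _) (fun n => ?_)
      tendsto_one_div_add_atTop_nhds_zero_nat
    rw [← norm_neg]; simpa [neg_sub] using hFle n
  exact isCompactOperator_of_tendsto htend (Eventually.of_forall hFc)

/-- Recursively chosen sequence: each term is picked depending on the finite set of
previous terms. -/
def onSeq (pick : Finset H → H) : ℕ → H
  | n => letI := Classical.decEq H
         pick ((Finset.range n).attach.image fun m => onSeq pick m.1)
decreasing_by exact Finset.mem_range.mp m.2

theorem onSeq_eq (pick : Finset H → H) (n : ℕ) :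
    onSeq pick n = letI := Classical.decEq H
      pick ((Finset.range n).attach.image fun m => onSeq pick m.1) := by
  rw [onSeq]

open Submodule in
theorem exists_orthonormal_seq (x : H →L[ℂ] H) {δ : ℝ}
    (hpick : ∀ s : Finset H, ∃ v : H, v ∈ (span ℂ (s : Set H))ᗮ ∧ ‖v‖ = 1 ∧ δ ≤ ‖x v‖) :
    ∃ e : ℕ → H, Orthonormal ℂ e ∧ ∀ j, δ ≤ ‖x (e j)‖ := by
  classical
  choose pick hmem hnorm hbound using hpick
  set e : ℕ → H := onSeq pick with he
  letI := Classical.decEq H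
  set S : ℕ → Finset H := fun n => (Finset.range n).attach.image fun m => onSeq pick m.1 with hS
  have heS : ∀ n, e n = pick (S n) := fun n => onSeq_eq pick n
  have hmem' : ∀ m n : ℕ, m < n → e m ∈ (S n : Set H) := by
    intro m n hmn
    simp only [hS, Finset.coe_image, Set.mem_image]
    exact ⟨⟨m, Finset.mem_range.mpr hmn⟩, Finset.mem_coe.mpr (Finset.mem_attach _ _), rfl⟩
  have horth : ∀ m n : ℕ, m < n → (inner ℂ (e m) (e n) : ℂ) = 0 := by
    intro m n hmn
    have h1 : e n ∈ (span ℂ ((S n : Set H)))ᗮ := heS n ▸ hmem (S n)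
    exact (Submodule.mem_orthogonal _ _).mp h1 (e m) (subset_span (hmem' m n hmn))
  have hunit : ∀ n, ‖e n‖ = 1 := fun n => heS n ▸ hnorm (S n)
  refine ⟨e, ?_, fun j => heS j ▸ hbound (S j)⟩
  rw [orthonormal_iff_ite]
  intro i j
  rcases lt_trichotomy i j with h | h | h
  · rw [horth i j h, if_neg h.ne]
  · subst h
    rw [if_pos rfl]
    rw [@inner_self_eq_norm_sq_to_K ℂ, hunit i]
    norm_num
  · rw [if_neg h.ne']
    rw [← inner_conj_symm, horth j i h, map_zero]

open scoped ENNReal in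
theorem stmt8_memℓp_mul {ι : Type*} (σ : ι → ℂ) (hσ : ∀ i, ‖σ i‖ ≤ 1)
    (f : lp (fun _ : ι => ℂ) 2) : Memℓp (fun i => σ i * f i) 2 := by
  have hp : 0 < (2 : ℝ≥0∞).toReal := by norm_num
  apply memℓp_gen
  refine Summable.of_nonneg_of_le (fun i => ?_) (fun i => ?_) ((lp.memℓp f).summable hp)
  · positivity
  · apply Real.rpow_le_rpow (norm_nonneg _) ?_ hp.le
    calc ‖σ i * f i‖ = ‖σ i‖ * ‖f i‖ := norm_mul _ _
      _ ≤ 1 * ‖f i‖ := by gcongr; exact hσ i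
      _ = ‖f i‖ := one_mul _

/-- Pointwise multiplication by a bounded symbol on ℓ², as a linear map. -/
def mulHom {ι : Type*} (σ : ι → ℂ) (hσ : ∀ i, ‖σ i‖ ≤ 1) :
    lp (fun _ : ι => ℂ) 2 →ₗ[ℂ] lp (fun _ : ι => ℂ) 2 where
  toFun f := ⟨fun i => σ i * f i, stmt8_memℓp_mul σ hσ f⟩
  map_add' f g := by
    ext i
    simp only [lp.coeFn_add, Pi.add_apply]
    exact mul_add _ _ _
  map_smul' c f := by
    ext i
    simp only [lp.coeFn_smul, Pi.smul_apply, smul_eq_mul, RingHom.id_apply]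
    ring

open scoped ENNReal in
theorem mulHom_norm_le {ι : Type*} (σ : ι → ℂ) (hσ : ∀ i, ‖σ i‖ ≤ 1)
    (f : lp (fun _ : ι => ℂ) 2) : ‖mulHom σ hσ f‖ ≤ 1 * ‖f‖ := by
  have hp : 0 < (2 : ℝ≥0∞).toReal := by norm_num
  rw [one_mul]
  apply lp.norm_le_of_forall_sum_le hp (norm_nonneg _)
  intro s
  calc ∑ i ∈ s, ‖(mulHom σ hσ f : ∀ _, ℂ) i‖ ^ (2 : ℝ≥0∞).toReal
      ≤ ∑ i ∈ s, ‖f i‖ ^ (2 : ℝ≥0∞).toReal := by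
        refine Finset.sum_le_sum fun i _ => ?_
        apply Real.rpow_le_rpow (norm_nonneg _) ?_ hp.le
        calc ‖σ i * f i‖ = ‖σ i‖ * ‖f i‖ := norm_mul _ _
          _ ≤ 1 * ‖f i‖ := by gcongr; exact hσ i
          _ = ‖f i‖ := one_mul _
    _ ≤ ‖f‖ ^ (2 : ℝ≥0∞).toReal := lp.sum_rpow_le_norm_rpow hp f s

/-- Pointwise multiplication by a bounded symbol on ℓ². -/
def mulOp {ι : Type*} (σ : ι → ℂ) (hσ : ∀ i, ‖σ i‖ ≤ 1) :
    lp (fun _ : ι => ℂ) 2 →L[ℂ] lp (fun _ : ι => ℂ) 2 :=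
  LinearMap.mkContinuous (mulHom σ hσ) 1 (mulHom_norm_le σ hσ)

theorem mulOp_apply {ι : Type*} (σ : ι → ℂ) (hσ : ∀ i, ‖σ i‖ ≤ 1) (f : lp (fun _ : ι => ℂ) 2)
    (i : ι) : (mulOp σ hσ f : ∀ _, ℂ) i = σ i * f i := rfl

theorem mulOp_norm_le {ι : Type*} (σ : ι → ℂ) (hσ : ∀ i, ‖σ i‖ ≤ 1) : ‖mulOp σ hσ‖ ≤ 1 :=
  LinearMap.mkContinuous_norm_le _ zero_le_one _

/-- A diagonal contraction with prescribed eigenvalues on a given orthonormal sequence. -/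
theorem exists_diag (e : ℕ → H) (he : Orthonormal ℂ e) (l : ℕ → ℂ) (hl : ∀ j, ‖l j‖ ≤ 1) :
    ∃ u : H →L[ℂ] H, ‖u‖ ≤ 1 ∧ ∀ j, u (e j) = l j • e j := by
  classical
  obtain ⟨w, b, hsw, hb⟩ := he.toSubtypeRange.exists_hilbertBasis_extension
  set σ : w → ℂ := fun i => if h : ∃ j, e j = (i : H) then l h.choose else 0 with hσdef
  have hσ : ∀ i, ‖σ i‖ ≤ 1 := by
    intro i
    simp only [hσdef]
    split
    · exact hl _
    · simp
  set M := mulOp σ hσ with hM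
  let u : H →L[ℂ] H :=
    ((b.repr.symm.toContinuousLinearEquiv : lp (fun _ : w => ℂ) 2 ≃L[ℂ] H) :
        lp (fun _ : w => ℂ) 2 →L[ℂ] H) ∘L M ∘L
      ((b.repr.toContinuousLinearEquiv : H ≃L[ℂ] lp (fun _ : w => ℂ) 2) :
        H →L[ℂ] lp (fun _ : w => ℂ) 2)
  have hu_apply : ∀ v, u v = b.repr.symm (M (b.repr v)) := fun v => rfl
  refine ⟨u, ?_, ?_⟩
  · apply ContinuousLinearMap.opNorm_le_bound _ zero_le_one
    intro v
    rw [one_mul, hu_apply, LinearIsometryEquiv.norm_map]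
    calc ‖M (b.repr v)‖ ≤ ‖M‖ * ‖b.repr v‖ := M.le_opNorm _
      _ ≤ 1 * ‖b.repr v‖ := by gcongr; exact mulOp_norm_le σ hσ
      _ = ‖v‖ := by rw [one_mul, LinearIsometryEquiv.norm_map]
  · intro j
    have hmem : e j ∈ w := hsw ⟨j, rfl⟩
    set i : w := ⟨e j, hmem⟩ with hi
    have hbi : b i = e j := by rw [hb]
    have hσi : σ i = l j := by
      simp only [hσdef]
      rw [dif_pos ⟨j, rfl⟩]
      congr 1
      have h' : ∃ j', e j' = (i : H) := ⟨j, rfl⟩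
      exact he.linearIndependent.injective h'.choose_spec
    have hrepr : b.repr (e j) = lp.single 2 i 1 := by rw [← hbi]; exact b.repr_self i
    have hMs : M (lp.single 2 i (1 : ℂ)) = σ i • lp.single 2 i (1 : ℂ) := by
      ext k
      rw [hM, mulOp_apply, lp.coeFn_smul, Pi.smul_apply]
      by_cases hk : k = i
      · subst hk; simp [lp.single_apply_self, smul_eq_mul, mul_comm]
      · rw [lp.single_apply_ne 2 i _ hk]; simp
    rw [hu_apply, hrepr, hMs, map_smul, b.repr_symm_single, hbi, hσi]

/-- Right multiplication by `u`, as a linear map on `B(H)`. -/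
def rmul (u : H →L[ℂ] H) : (H →L[ℂ] H) →ₗ[ℂ] (H →L[ℂ] H) where
  toFun z := z ∘L u
  map_add' a b := ContinuousLinearMap.add_comp a b u
  map_smul' c a := ContinuousLinearMap.smul_comp c a u

theorem sVal_nonempty (n : ℕ) :
    Nonempty {F : H →L[ℂ] H //
      Module.rank ℂ (LinearMap.range (F : H →ₗ[ℂ] H)) ≤ (n : Cardinal)} := by
  refine ⟨⟨0, ?_⟩⟩
  have h : LinearMap.range ((0 : H →L[ℂ] H) : H →ₗ[ℂ] H) = ⊥ := LinearMap.range_eq_bot.mpr rfl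
  rw [h]
  simpa using (zero_le _ : (0 : Cardinal) ≤ n)

theorem sVal_bddBelow (x : H →L[ℂ] H) (n : ℕ) :
    BddBelow (Set.range fun F : {F : H →L[ℂ] H //
      Module.rank ℂ (LinearMap.range (F : H →ₗ[ℂ] H)) ≤ (n : Cardinal)} => ‖x - F.1‖) := by
  refine ⟨0, ?_⟩
  rintro y ⟨F, rfl⟩
  exact norm_nonneg _

theorem sVal_nonneg (x : H →L[ℂ] H) (n : ℕ) : 0 ≤ sVal x n :=
  Real.iInf_nonneg fun _ => norm_nonneg _

theorem sVal_rmul_le (u : H →L[ℂ] H) (hu : ‖u‖ ≤ 1) (z : H →L[ℂ] H) (n : ℕ) :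
    sVal (z ∘L u) n ≤ sVal z n := by
  haveI := sVal_nonempty (H := H) n
  apply le_ciInf
  intro F
  have hrank : Module.rank ℂ (LinearMap.range ((F.1 ∘L u) : H →ₗ[ℂ] H)) ≤ (n : Cardinal) := by
    refine le_trans ?_ F.2
    have h1 : LinearMap.range ((F.1 ∘L u) : H →ₗ[ℂ] H) ≤ LinearMap.range (F.1 : H →ₗ[ℂ] H) := by
      rw [ContinuousLinearMap.toLinearMap_comp]
      exact LinearMap.range_comp_le_range _ _
    exact Submodule.rank_mono h1
  have hle : sVal (z ∘L u) n ≤ ‖z ∘L u - F.1 ∘L u‖ :=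
    ciInf_le (sVal_bddBelow _ n) ⟨F.1 ∘L u, hrank⟩
  refine hle.trans ?_
  rw [← ContinuousLinearMap.sub_comp]
  calc ‖(z - F.1) ∘L u‖ ≤ ‖z - F.1‖ * ‖u‖ := ContinuousLinearMap.opNorm_comp_le _ _
    _ ≤ ‖z - F.1‖ * 1 := by gcongr
    _ = ‖z - F.1‖ := mul_one _

theorem isDS_rmul (u : H →L[ℂ] H) (hu : ‖u‖ ≤ 1) : IsDS (rmul u) := by
  constructor
  · intro z
    calc ‖z ∘L u‖ ≤ ‖z‖ * ‖u‖ := ContinuousLinearMap.opNorm_comp_le _ _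
      _ ≤ ‖z‖ * 1 := by gcongr
      _ = ‖z‖ := mul_one _
  · intro z hz
    have hsum : Summable (sVal ((rmul u) z)) :=
      hz.of_nonneg_of_le (fun n => sVal_nonneg _ n) (fun n => sVal_rmul_le u hu z n)
    exact ⟨hsum, hsum.tsum_le_tsum (fun n => sVal_rmul_le u hu z n) hz⟩

theorem lmPow_rmul (u : H →L[ℂ] H) (k : ℕ) (z : H →L[ℂ] H) :
    lmPow (rmul u) k z = z ∘L (u ^ k) := by
  induction k with
  | zero =>
    simp only [lmPow, LinearMap.id_apply, pow_zero]
    rfl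
  | succ k ih =>
    simp only [lmPow, LinearMap.comp_apply, ih]
    show (z ∘L u ^ k) ∘L u = z ∘L u ^ (k + 1)
    rw [ContinuousLinearMap.comp_assoc, pow_succ]
    rfl

theorem pow_eigen (u : H →L[ℂ] H) (v : H) (c : ℂ) (hv : u v = c • v) (k : ℕ) :
    (u ^ k) v = c ^ k • v := by
  induction k with
  | zero => simp
  | succ k ih =>
    rw [pow_succ', pow_succ']
    show u ((u ^ k) v) = (c * c ^ k) • v
    rw [ih, map_smul, hv, smul_smul]; ring_nf

theorem cesaro_rmul_eigen (u : H →L[ℂ] H) (x : H →L[ℂ] H) (v : H) (c : ℂ)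
    (hv : u v = c • v) (n : ℕ) :
    (cesaro (rmul u) n x) v = (((n : ℂ) + 1)⁻¹ * ∑ k ∈ Finset.range (n + 1), c ^ k) • x v := by
  rw [cesaro]
  rw [ContinuousLinearMap.smul_apply, ContinuousLinearMap.sum_apply]
  have hterm : ∀ k, ((lmPow (rmul u) k x) : H →L[ℂ] H) v = c ^ k • x v := by
    intro k
    rw [lmPow_rmul]
    show x ((u ^ k) v) = c ^ k • x v
    rw [pow_eigen u v c hv k, map_smul]
  rw [Finset.sum_congr rfl fun k _ => hterm k, ← Finset.sum_smul, smul_smul]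

/-- Cesàro average of powers of a real number. -/
def cesR (l : ℝ) (n : ℕ) : ℝ := ((n : ℝ) + 1)⁻¹ * ∑ k ∈ Finset.range (n + 1), l ^ k

theorem pow_le_cesR {l : ℝ} (h0 : 0 ≤ l) (h1 : l ≤ 1) (n : ℕ) : l ^ n ≤ cesR l n := by
  rw [cesR]
  have hsum : ((n : ℝ) + 1) * l ^ n ≤ ∑ k ∈ Finset.range (n + 1), l ^ k := by
    calc ((n : ℝ) + 1) * l ^ n = ∑ _k ∈ Finset.range (n + 1), l ^ n := by
          rw [Finset.sum_const, Finset.card_range]; push_cast; ring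
      _ ≤ ∑ k ∈ Finset.range (n + 1), l ^ k := by
          refine Finset.sum_le_sum fun k hk => ?_
          exact pow_le_pow_of_le_one h0 h1 (Nat.le_of_lt_succ (Finset.mem_range.mp hk))
  have hpos : (0 : ℝ) < (n : ℝ) + 1 := by positivity
  calc l ^ n = ((n : ℝ) + 1)⁻¹ * (((n : ℝ) + 1) * l ^ n) := by field_simp
    _ ≤ ((n : ℝ) + 1)⁻¹ * ∑ k ∈ Finset.range (n + 1), l ^ k := by gcongr

theorem cesR_le {l : ℝ} (h0 : 0 ≤ l) (h1 : l < 1) (n : ℕ) :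
    cesR l n ≤ ((n : ℝ) + 1)⁻¹ * (1 - l)⁻¹ := by
  rw [cesR]
  have hsum : ∑ k ∈ Finset.range (n + 1), l ^ k ≤ (1 - l)⁻¹ := by
    have h := (summable_geometric_of_lt_one h0 h1).sum_le_tsum (Finset.range (n + 1))
      (fun k _ => by positivity)
    rwa [tsum_geometric_of_lt_one h0 h1] at h
  gcongr

end Stmt8Aux

/-- for every bounded non-compact operator `x` there is a Dunford–Schwartz
operator `T` such that `A_n(T)(x)` does not converge in operator norm. -/
theorem stmt8 {H : Type*} [NormedAddCommGroup H] [InnerProductSpace ℂ H] [CompleteSpace H]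
    (x : H →L[ℂ] H) (hx : ¬ IsCpt x) :
    ∃ T : (H →L[ℂ] H) →ₗ[ℂ] (H →L[ℂ] H), IsDS T ∧
      ¬ ∃ xhat : H →L[ℂ] H, Tendsto (fun n => ‖cesaro T n x - xhat‖) atTop (nhds 0) := by
  have hx' : ¬ IsCompactOperator (⇑x) := hx
  obtain ⟨δ, hδ, hpick⟩ := exists_perp_unit x hx'
  obtain ⟨e, he, hbd⟩ := exists_orthonormal_seq x hpick
  set l : ℕ → ℝ := fun j => 1 - 1 / ((j : ℝ) + 1) with hldef
  have hjpos : ∀ j : ℕ, (0 : ℝ) < (j : ℝ) + 1 := fun j => by positivity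
  have hl0 : ∀ j, 0 ≤ l j := by
    intro j
    have h1 : 1 / ((j : ℝ) + 1) ≤ 1 := by
      rw [div_le_one (hjpos j)]
      linarith [Nat.cast_nonneg (α := ℝ) j]
    simp only [hldef]
    linarith
  have hl1 : ∀ j, l j < 1 := by
    intro j
    have h1 : 0 < 1 / ((j : ℝ) + 1) := by positivity
    simp only [hldef]
    linarith
  obtain ⟨u, hu, hue⟩ := exists_diag e he (fun j => ((l j : ℝ) : ℂ)) (fun j => by
    rw [Complex.norm_real, Real.norm_eq_abs, abs_of_nonneg (hl0 j)]
    linarith [hl1 j])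
  refine ⟨rmul u, isDS_rmul u hu, ?_⟩
  rintro ⟨xhat, hten⟩
  set A : ℕ → H →L[ℂ] H := fun n => cesaro (rmul u) n x with hA
  have hAj : ∀ n j, A n (e j) = ((cesR (l j) n : ℝ) : ℂ) • x (e j) := by
    intro n j
    simp only [hA]
    rw [cesaro_rmul_eigen u x (e j) ((l j : ℝ) : ℂ) (hue j) n]
    congr 1
    rw [cesR]
    push_cast
    ring
  have key : ∀ n m j, δ * |cesR (l j) n - cesR (l j) m| ≤ ‖A n - A m‖ := by
    intro n m j
    have h1 : ‖(A n - A m) (e j)‖ ≤ ‖A n - A m‖ := by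
      calc ‖(A n - A m) (e j)‖ ≤ ‖A n - A m‖ * ‖e j‖ := ContinuousLinearMap.le_opNorm _ _
        _ = ‖A n - A m‖ := by rw [he.1 j, mul_one]
    have h2 : (A n - A m) (e j) = ((cesR (l j) n - cesR (l j) m : ℝ) : ℂ) • x (e j) := by
      rw [ContinuousLinearMap.sub_apply, hAj n j, hAj m j, ← sub_smul, Complex.ofReal_sub]
    have h3 : ‖(A n - A m) (e j)‖ = |cesR (l j) n - cesR (l j) m| * ‖x (e j)‖ := by
      rw [h2, norm_smul, Complex.norm_real, Real.norm_eq_abs]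
    calc δ * |cesR (l j) n - cesR (l j) m|
        = |cesR (l j) n - cesR (l j) m| * δ := mul_comm _ _
      _ ≤ |cesR (l j) n - cesR (l j) m| * ‖x (e j)‖ :=
          mul_le_mul_of_nonneg_left (hbd j) (abs_nonneg _)
      _ = ‖(A n - A m) (e j)‖ := h3.symm
      _ ≤ ‖A n - A m‖ := h1
  have h5 : (0 : ℝ) < δ / 5 := by positivity
  rw [Metric.tendsto_atTop] at hten
  obtain ⟨N, hN⟩ := hten (δ / 5) h5
  have hN' : ∀ n, N ≤ n → ‖A n - xhat‖ < δ / 5 := by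
    intro n hn
    have h := hN n hn
    rwa [Real.dist_0_eq_abs, abs_of_nonneg (norm_nonneg _)] at h
  set j : ℕ := 4 * N with hj
  have hj1 : ((j : ℝ) + 1) = 4 * (N : ℝ) + 1 := by rw [hj]; push_cast; ring
  have hcesN : (3 : ℝ) / 4 ≤ cesR (l j) N := by
    have h1 : l j ^ N ≤ cesR (l j) N := pow_le_cesR (hl0 j) (hl1 j).le N
    have hge : (-2 : ℝ) ≤ -(1 / ((j : ℝ) + 1)) := by
      have : 1 / ((j : ℝ) + 1) ≤ 1 := by
        rw [div_le_one (hjpos j)]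
        linarith [Nat.cast_nonneg (α := ℝ) j]
      linarith
    have h2 := one_add_mul_le_pow hge N
    have h3 : (1 + -(1 / ((j : ℝ) + 1))) = l j := by simp only [hldef]; ring
    rw [h3] at h2
    have hfrac : (N : ℝ) * (1 / ((j : ℝ) + 1)) ≤ 1 / 4 := by
      rw [hj1, mul_one_div, div_le_div_iff₀ (by positivity) (by norm_num)]
      linarith
    have h4 : 1 - (N : ℝ) * (1 / ((j : ℝ) + 1)) ≤ l j ^ N := by
      calc 1 - (N : ℝ) * (1 / ((j : ℝ) + 1)) = 1 + (N : ℝ) * -(1 / ((j : ℝ) + 1)) := by ring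
        _ ≤ l j ^ N := h2
    linarith
  set m : ℕ := max N (4 * j + 4) with hm
  have hmN : N ≤ m := le_max_left _ _
  have hmge : ((4 * j + 4 : ℕ) : ℝ) ≤ (m : ℝ) := by exact_mod_cast le_max_right N (4 * j + 4)
  have hcesm : cesR (l j) m ≤ 1 / 4 := by
    have h1 := cesR_le (hl0 j) (hl1 j) m
    have h2 : (1 - l j) = 1 / ((j : ℝ) + 1) := by simp only [hldef]; ring
    rw [h2, one_div, inv_inv] at h1
    refine h1.trans ?_
    rw [inv_mul_eq_div, div_le_div_iff₀ (by positivity) (by norm_num)]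
    have : (4 : ℝ) * (j : ℝ) + 4 ≤ (m : ℝ) := by push_cast at hmge; linarith
    linarith
  have hdiff : (1 : ℝ) / 2 ≤ |cesR (l j) N - cesR (l j) m| := by
    have h := le_abs_self (cesR (l j) N - cesR (l j) m)
    linarith
  have hub : ‖A N - A m‖ < 2 * (δ / 5) := by
    have hN1 := hN' N le_rfl
    have hN2 := hN' m hmN
    calc ‖A N - A m‖ = ‖(A N - xhat) - (A m - xhat)‖ := by congr 1; abel
      _ ≤ ‖A N - xhat‖ + ‖A m - xhat‖ := norm_sub_le _ _
      _ < δ / 5 + δ / 5 := add_lt_add hN1 hN2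
      _ = 2 * (δ / 5) := by ring
  have hlb : δ * (1 / 2) ≤ ‖A N - A m‖ := by
    refine le_trans ?_ (key N m j)
    exact mul_le_mul_of_nonneg_left hdiff hδ.le
  linarith
end
end
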